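/- Suppose (U'₁,U'₂,<') is the result of applying a case II coherent extended Nielsen transformation to a coherent extended word equation (U₁,U₂,<) whose cut graph G_{U₁,U₂,<} is acyclic. Then for every boundary (i,j) ∈ B' of (U'₁,U'₂), the fecundity satisfies f_{U'₁,U'₂,<'}(i,j) ≤ f_{U₁,U₂,<}(i,ν(i,j)). -/

import Mathlib

open scoped Classical

namespace ExtWordEq

/-- The type of (candidate) boundary orders: relations on pairs (i,j). -/
abbrev BRel : Type := ℕ × ℕ → ℕ × ℕ → Prop

variable {X : Type*}

/-- The `i`-th side of the word equation (`i = 1` gives `U₁`, anything else `U₂`). -/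
def word (U₁ U₂ : List X) (i : ℕ) : List X := if i = 1 then U₁ else U₂

/-- The variable `U_{i,j}` (1-indexed), as an optional value. -/
def letter (U₁ U₂ : List X) (b : ℕ × ℕ) : Option X := (word U₁ U₂ b.1)[b.2 - 1]?

/-- `b` is a boundary of the word equation `(U₁, U₂)`. -/
def Boundary (U₁ U₂ : List X) (b : ℕ × ℕ) : Prop :=
  (b.1 = 1 ∨ b.1 = 2) ∧ 1 ≤ b.2 ∧ b.2 ≤ (word U₁ U₂ b.1).length

/-- `b` is a boundary of `(U₁, U₂)` or one of the conventional boundaries `(1,0)`, `(2,0)`. -/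
def EBoundary (U₁ U₂ : List X) (b : ℕ × ℕ) : Prop :=
  (b.1 = 1 ∨ b.1 = 2) ∧ b.2 ≤ (word U₁ U₂ b.1).length

/-- Incomparability `a ≈ b` for a strict order. -/
def Incomp (lt : BRel) (a b : ℕ × ℕ) : Prop := ¬ lt a b ∧ ¬ lt b a

/-- `lt` is a boundary order for the word equation `(U₁, U₂)`:
a strict weak order on the boundaries (together with the conventional boundaries
`(1,0) ≈ (2,0)`), extending `(i,j) < (i,j+1)` and with `(1,m) ≈ (2,n)`. -/
structure BoundaryOrder (U₁ U₂ : List X) (lt : BRel) : Prop where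
  irrefl : ∀ a, EBoundary U₁ U₂ a → ¬ lt a a
  trans : ∀ a b c, EBoundary U₁ U₂ a → EBoundary U₁ U₂ b → EBoundary U₁ U₂ c →
    lt a b → lt b c → lt a c
  incomp_trans : ∀ a b c, EBoundary U₁ U₂ a → EBoundary U₁ U₂ b → EBoundary U₁ U₂ c →
    Incomp lt a b → Incomp lt b c → Incomp lt a c
  succ : ∀ i j : ℕ, EBoundary U₁ U₂ (i, j + 1) → lt (i, j) (i, j + 1)
  top : Incomp lt (1, U₁.length) (2, U₂.length)
  bot : Incomp lt (1, 0) (2, 0)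

/-- `L(U_{i,1} U_{i,2} ⋯ U_{i,j})` where `L` is the additive extension of a length
assignment on variables. -/
def prefixLen (U₁ U₂ : List X) (L : X → ℕ) (b : ℕ × ℕ) : ℕ :=
  (((word U₁ U₂ b.1).take b.2).map L).sum

/-- The extended word equation `(U₁, U₂, lt)` is coherent. -/
def Coherent (U₁ U₂ : List X) (lt : BRel) : Prop :=
  ∃ L : X → ℕ, (∀ x, 0 < L x) ∧
    ∀ a b, Boundary U₁ U₂ a → Boundary U₁ U₂ b →
      (lt a b ↔ prefixLen U₁ U₂ L a < prefixLen U₁ U₂ L b)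

/-- The boundary `a` cuts the boundary `b`. -/
def Cuts (U₁ U₂ : List X) (lt : BRel) (a b : ℕ × ℕ) : Prop :=
  Boundary U₁ U₂ a ∧ Boundary U₁ U₂ b ∧ a ≠ b ∧
    lt (a.1, a.2 - 1) b ∧ lt (b.1, b.2 - 1) a

/-- The boundary `a` mirrors the boundary `b`. -/
def Mirrors (U₁ U₂ : List X) (lt : BRel) (a b : ℕ × ℕ) : Prop :=
  Boundary U₁ U₂ a ∧ Boundary U₁ U₂ b ∧ letter U₁ U₂ a = letter U₁ U₂ b ∧
    (¬ Incomp lt a b ∨ ¬ Incomp lt (a.1, a.2 - 1) (b.1, b.2 - 1))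

/-- Edge relation of the cut graph `G_{U₁,U₂,<}`. -/
def CutEdge (U₁ U₂ : List X) (lt : BRel) (a b : ℕ × ℕ) : Prop :=
  ∃ c, Cuts U₁ U₂ lt a c ∧ Mirrors U₁ U₂ lt c b

/-- `w 0, w 1, …, w n` is a cycle (of length `n ≥ 1`) in the cut graph. -/
def IsCycle (U₁ U₂ : List X) (lt : BRel) (n : ℕ) (w : ℕ → ℕ × ℕ) : Prop :=
  0 < n ∧ w n = w 0 ∧ ∀ k < n, CutEdge U₁ U₂ lt (w k) (w (k + 1))

/-- The cut graph `G_{U₁,U₂,<}` is acyclic. -/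
def Acyclic (U₁ U₂ : List X) (lt : BRel) : Prop :=
  ¬ ∃ n w, IsCycle U₁ U₂ lt n w

variable [DecidableEq X]

/-- Case I extended Nielsen transformation (here `x = U_{1,1}`, `y = U_{2,1}`,
and `T(y) = x`). -/
def NielsenI (U₁ U₂ : List X) (lt : BRel) (U₁' U₂' : List X) (lt' : BRel) : Prop :=
  ∃ x y : X, U₁.head? = some x ∧ U₂.head? = some y ∧
    Incomp lt (1, 1) (2, 1) ∧
    U₁' = (U₁.map fun z => if z = y then x else z).tail ∧
    U₂' = (U₂.map fun z => if z = y then x else z).tail ∧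
    BoundaryOrder U₁' U₂' lt' ∧
    ∀ a b : ℕ × ℕ, EBoundary U₁' U₂' a → EBoundary U₁' U₂' b →
      (lt' a b ↔ lt (a.1, a.2 + 1) (b.1, b.2 + 1))

/-- The substitution `T(x) = y x` (identity on other variables), applied to a word. -/
def expand (x y : X) (l : List X) : List X :=
  l.flatMap fun z => if z = x then [y, x] else [z]

/-- The map `μ(i,j) = j + #{j' ≤ j : U_{i,j'} = x} − 1` (as a map on boundaries),
where `x = U_{1,1}`. -/
def mu (U₁ U₂ : List X) (x : X) (b : ℕ × ℕ) : ℕ × ℕ :=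
  (b.1, b.2 + ((word U₁ U₂ b.1).take b.2).count x - 1)

/-- The map `ν(i,j) = j − #{j' ≤ j : U'_{i,j'} = x} + 1` (as a map on boundaries),
where `x = U_{1,1}`. -/
def nu (U₁' U₂' : List X) (x : X) (b : ℕ × ℕ) : ℕ × ℕ :=
  (b.1, b.2 - ((word U₁' U₂' b.1).take b.2).count x + 1)

/-- Membership in `B⁻ = B ∖ {(2,1)}`. -/
def Bminus (U₁ U₂ : List X) (b : ℕ × ℕ) : Prop := Boundary U₁ U₂ b ∧ b ≠ (2, 1)

/-- Membership in `B'⁻ = {(i, μ(i,j)) : (i,j) ∈ B⁻}` (`x = U_{1,1}`). -/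
def Bpminus (U₁ U₂ : List X) (x : X) (b' : ℕ × ℕ) : Prop :=
  ∃ b, Bminus U₁ U₂ b ∧ mu U₁ U₂ x b = b'

/-- Case II extended Nielsen transformation, with the heads `x = U_{1,1}`,
`y = U_{2,1}` made explicit. -/
def NielsenIIxy (U₁ U₂ : List X) (lt : BRel) (U₁' U₂' : List X) (lt' : BRel)
    (x y : X) : Prop :=
  U₁.head? = some x ∧ U₂.head? = some y ∧
  lt (2, 1) (1, 1) ∧
  U₁' = (expand x y U₁).tail ∧
  U₂' = (expand x y U₂).tail ∧
  BoundaryOrder U₁' U₂' lt' ∧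
  ∀ a b, Bpminus U₁ U₂ x a → Bpminus U₁ U₂ x b →
    (lt' a b ↔ lt (nu U₁' U₂' x a) (nu U₁' U₂' x b))

/-- Case II extended Nielsen transformation. -/
def NielsenII (U₁ U₂ : List X) (lt : BRel) (U₁' U₂' : List X) (lt' : BRel) : Prop :=
  ∃ x y : X, NielsenIIxy U₁ U₂ lt U₁' U₂' lt' x y

/-- The dual boundary order. -/
def dualRel (lt : BRel) : BRel := fun a b => lt (3 - a.1, a.2) (3 - b.1, b.2)

/-- Case III extended Nielsen transformation: case II applied to the dual,
then dualized back. -/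
def NielsenIII (U₁ U₂ : List X) (lt : BRel) (U₁' U₂' : List X) (lt' : BRel) : Prop :=
  NielsenII U₂ U₁ (dualRel lt) U₂' U₁' (dualRel lt')

/-- `(U₁', U₂', lt')` is an extended Nielsen transformation of the nontrivial coherent
extended word equation `(U₁, U₂, lt)`. -/
def ExtNielsen (U₁ U₂ : List X) (lt : BRel) (U₁' U₂' : List X) (lt' : BRel) : Prop :=
  U₁ ≠ [] ∧ U₂ ≠ [] ∧ BoundaryOrder U₁ U₂ lt ∧ Coherent U₁ U₂ lt ∧
    (NielsenI U₁ U₂ lt U₁' U₂' lt' ∨ NielsenII U₁ U₂ lt U₁' U₂' lt' ∨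
      NielsenIII U₁ U₂ lt U₁' U₂' lt')

/-- A coherent extended Nielsen transformation. -/
def CohNielsen (U₁ U₂ : List X) (lt : BRel) (U₁' U₂' : List X) (lt' : BRel) : Prop :=
  ExtNielsen U₁ U₂ lt U₁' U₂' lt' ∧ Coherent U₁' U₂' lt'

/-- `(U₁, U₂, lt)` is (strongly) terminating: there is no infinite sequence of coherent
extended Nielsen transformations starting from it. -/
def Terminating (U₁ U₂ : List X) (lt : BRel) : Prop :=
  ¬ ∃ f : ℕ → List X × List X × BRel,
    f 0 = (U₁, U₂, lt) ∧
    ∀ n, CohNielsen (f n).1 (f n).2.1 (f n).2.2 (f (n + 1)).1 (f (n + 1)).2.1 (f (n + 1)).2.2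


/-- The finite set of boundaries of `(U₁, U₂)`. -/
def boundaryFinset (U₁ U₂ : List X) : Finset (ℕ × ℕ) :=
  ((Finset.range U₁.length).image fun j => (1, j + 1)) ∪
    ((Finset.range U₂.length).image fun j => (2, j + 1))

/-- `f` is the fecundity function of `(U₁, U₂, lt)`: on every boundary `b`,
`f b = 1 + max over boundaries c cut by b of (sum over boundaries d mirrored by c of f d)`. -/
def IsFecundity (U₁ U₂ : List X) (lt : BRel) (f : ℕ × ℕ → ℕ) : Prop :=
  ∀ b ∈ boundaryFinset U₁ U₂,
    f b = 1 + ((boundaryFinset U₁ U₂).filter fun c => Cuts U₁ U₂ lt b c).sup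
      fun c => ((boundaryFinset U₁ U₂).filter fun d => Mirrors U₁ U₂ lt c d).sum f

/-! ### List-level lemmas about `expand` -/

section ListLemmas

variable {X : Type*} [DecidableEq X] (x y : X)

lemma expand_append (u v : List X) :
    expand x y (u ++ v) = expand x y u ++ expand x y v := by
  simp [expand]

lemma expand_cons (a : X) (t : List X) :
    expand x y (a :: t) = (if a = x then [y, x] else [a]) ++ expand x y t := by
  simp [expand]

lemma length_expand (w : List X) :
    (expand x y w).length = w.length + w.count x := by
  induction w with
  | nil => simp [expand]
  | cons a t ih =>
    rw [expand_cons]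
    by_cases h : a = x <;> simp [h, ih, List.count_cons] <;> omega

lemma count_expand (hxy : y ≠ x) (w : List X) :
    (expand x y w).count x = w.count x := by
  induction w with
  | nil => simp [expand]
  | cons a t ih =>
    rw [expand_cons]
    by_cases h : a = x <;> simp [h, ih, List.count_cons, hxy]

lemma take_expand (w : List X) (j : ℕ) (hj : j ≤ w.length) :
    (expand x y w).take (j + (w.take j).count x) = expand x y (w.take j) := by
  conv_lhs => rw [← List.take_append_drop j w, expand_append]
  rw [List.take_append_of_le_length (by rw [length_expand]; simp [hj]),
    List.take_of_length_le (by rw [length_expand]; simp [hj])]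

lemma drop_expand (w : List X) (j : ℕ) (hj : j ≤ w.length) :
    (expand x y w).drop (j + (w.take j).count x) = expand x y (w.drop j) := by
  conv_lhs => rw [← List.take_append_drop j w, expand_append]
  rw [List.drop_append_of_le_length (by rw [length_expand]; simp [hj]),
    List.drop_of_length_le (by rw [length_expand]; simp [hj])]
  simp

lemma count_take_succ (w : List X) (j : ℕ) (a : X) (hj : w[j]? = some a) :
    (w.take (j+1)).count x = (w.take j).count x + (if a = x then 1 else 0) := by
  rw [List.take_succ, hj]
  simp [List.count_append, List.count_cons]

end ListLemmas
section ListLemmas2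

variable {X : Type*} [DecidableEq X] (x y : X)

lemma getElem?_expand_at (w : List X) (j : ℕ) (a : X) (hj : w[j]? = some a) :
    (expand x y w)[j + (w.take j).count x]? =
      some (if a = x then y else a) := by
  obtain ⟨hjl, rfl⟩ := List.getElem?_eq_some_iff.mp hj
  have hd : w.drop j = w[j] :: w.drop (j+1) := List.drop_eq_getElem_cons hjl
  have h1 : (expand x y (w.drop j))[0]? = (expand x y w)[j + (w.take j).count x + 0]? := by
    rw [← drop_expand x y w j (le_of_lt hjl)]; exact List.getElem?_drop
  rw [Nat.add_zero] at h1
  rw [← h1, hd, expand_cons]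
  by_cases h : w[j] = x <;> simp [h]

lemma getElem?_expand_at' (w : List X) (j : ℕ) (hj : w[j]? = some x) :
    (expand x y w)[j + (w.take j).count x + 1]? = some x := by
  obtain ⟨hjl, hje⟩ := List.getElem?_eq_some_iff.mp hj
  have hd : w.drop j = w[j] :: w.drop (j+1) := List.drop_eq_getElem_cons hjl
  have h1 : (expand x y (w.drop j))[1]? = (expand x y w)[j + (w.take j).count x + 1]? := by
    rw [← drop_expand x y w j (le_of_lt hjl)]; exact List.getElem?_drop
  rw [← h1, hd, expand_cons, hje]
  simp

/-- The dichotomy: every position `p` (1-indexed) in `expand x y w` is either the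
end of the expansion of an old prefix of length `j` (case A), or the middle of the
expansion `[y, x]` of an old occurrence of `x` at position `j` (case B). -/
lemma expand_dichotomy (w : List X) :
    ∀ p, 1 ≤ p → p ≤ (expand x y w).length →
    ∃ j, 1 ≤ j ∧ j ≤ w.length ∧
      (p = j + (w.take j).count x ∨
       (p + 1 = j + (w.take j).count x ∧ w[j-1]? = some x)) := by
  intro p
  induction p with
  | zero => omega
  | succ p ih =>
    intro _ hple
    by_cases h1 : p = 0
    · subst h1
      have hw : w ≠ [] := by
        intro h; subst h; simp [expand] at hple
      obtain ⟨a, t, rfl⟩ := List.exists_cons_of_ne_nil hw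
      refine ⟨1, le_refl 1, by simp, ?_⟩
      by_cases h : a = x
      · right; subst h; simp [List.count_cons]
      · left; simp [List.count_cons, h]
    · obtain ⟨j, hj1, hjl, hcase⟩ := ih (by omega) (by omega)
      rcases hcase with hA | hB
      · rcases Nat.eq_or_lt_of_le hjl with hjeq | hjlt
        · exfalso
          have hlen : (expand x y w).length = w.length + w.count x := length_expand x y w
          have : p = (expand x y w).length := by
            rw [hjeq, List.take_of_length_le (le_refl _)] at hA
            omega
          omega
        · obtain ⟨a, ha⟩ : ∃ a, w[j]? = some a :=
            ⟨w[j], List.getElem?_eq_getElem hjlt⟩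
          have hc := count_take_succ x w j a ha
          by_cases hax : a = x
          · refine ⟨j+1, by omega, by omega, Or.inr ⟨by rw [hc]; simp [hax]; omega, ?_⟩⟩
            simpa [hax] using ha
          · exact ⟨j+1, by omega, by omega, Or.inl (by rw [hc]; simp [hax]; omega)⟩
      · exact ⟨j, hj1, hjl, Or.inl (by omega)⟩

end ListLemmas2
set_option linter.unusedSectionVars false

section PrefixLen

variable {X : Type*} [DecidableEq X] {U₁ U₂ : List X} {lt : BRel} {L : X → ℕ}

lemma prefixLen_zero (i : ℕ) : prefixLen U₁ U₂ L (i, 0) = 0 := by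
  simp [prefixLen]

lemma prefixLen_succ {i j : ℕ} {a : X} (h : (word U₁ U₂ i)[j]? = some a) :
    prefixLen U₁ U₂ L (i, j+1) = prefixLen U₁ U₂ L (i, j) + L a := by
  simp only [prefixLen, List.take_succ, h]
  simp

lemma prefixLen_lt (hL : ∀ z, 0 < L z) {i j k : ℕ}
    (hjk : j < k) (hk : k ≤ (word U₁ U₂ i).length) :
    prefixLen U₁ U₂ L (i, j) < prefixLen U₁ U₂ L (i, k) := by
  induction k with
  | zero => omega
  | succ k ih =>
    obtain ⟨a, ha⟩ : ∃ a, (word U₁ U₂ i)[k]? = some a :=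
      ⟨(word U₁ U₂ i)[k]'(by omega), List.getElem?_eq_getElem (by omega)⟩
    rw [prefixLen_succ ha]
    rcases Nat.lt_or_ge j k with h | h
    · have := ih h (by omega); have := hL a; omega
    · have : j = k := by omega
      subst this; have := hL a; omega

lemma prefixLen_pos (hL : ∀ z, 0 < L z) {b : ℕ × ℕ} (hb : Boundary U₁ U₂ b) :
    0 < prefixLen U₁ U₂ L b := by
  obtain ⟨i, j⟩ := b
  have h0 : prefixLen U₁ U₂ L (i, 0) = 0 := prefixLen_zero i
  have := prefixLen_lt (U₁ := U₁) (U₂ := U₂) (L := L) hL (i := i) (j := 0) (k := j)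
    hb.2.1 hb.2.2
  omega

lemma prefixLen_le (hL : ∀ z, 0 < L z) {i j k : ℕ}
    (hjk : j ≤ k) (hk : k ≤ (word U₁ U₂ i).length) :
    prefixLen U₁ U₂ L (i, j) ≤ prefixLen U₁ U₂ L (i, k) := by
  rcases Nat.eq_or_lt_of_le hjk with rfl | h
  · exact le_refl _
  · exact (prefixLen_lt hL h hk).le

lemma lt_chain (hbo : BoundaryOrder U₁ U₂ lt) {i j k : ℕ}
    (hjk : j < k) (hEB : EBoundary U₁ U₂ (i, k)) : lt (i, j) (i, k) := by
  induction k, hjk using Nat.le_induction with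
  | base => exact hbo.succ i j hEB
  | succ k hk ih =>
    have hEBk : EBoundary U₁ U₂ (i, k) := ⟨hEB.1, by have := hEB.2; simp at this ⊢; omega⟩
    exact hbo.trans _ _ _ ⟨hEB.1, by have := hEBk.2; simp at this ⊢; omega⟩ hEBk hEB
      (ih hEBk) (hbo.succ i k hEB)

lemma incomp_bot' (hbo : BoundaryOrder U₁ U₂ lt) {i₀ i : ℕ}
    (hi₀ : i₀ = 1 ∨ i₀ = 2) (hi : i = 1 ∨ i = 2) (hne : i₀ ≠ i) :
    Incomp lt (i₀, 0) (i, 0) := by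
  rcases hi₀ with rfl | rfl <;> rcases hi with rfl | rfl <;> first
    | omega
    | exact hbo.bot
    | exact ⟨hbo.bot.2, hbo.bot.1⟩

lemma lt_zero_bd (hbo : BoundaryOrder U₁ U₂ lt) {i₀ : ℕ} (hi₀ : i₀ = 1 ∨ i₀ = 2)
    {b : ℕ × ℕ} (hb : Boundary U₁ U₂ b) : lt (i₀, 0) b := by
  obtain ⟨i, j⟩ := b
  have hEBb : EBoundary U₁ U₂ (i, j) := ⟨hb.1, hb.2.2⟩
  have hchain : lt (i, 0) (i, j) := lt_chain hbo (by have := hb.2.1; omega) hEBb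
  by_cases hii : i₀ = i
  · subst hii; exact hchain
  · have hEB0 : EBoundary U₁ U₂ (i₀, 0) := ⟨hi₀, by omega⟩
    have hEB0' : EBoundary U₁ U₂ (i, 0) := ⟨hb.1, by omega⟩
    by_contra hlt
    have h2 : ¬ lt (i, j) (i₀, 0) := by
      intro h
      have h3 : lt (i, 0) (i₀, 0) := hbo.trans _ _ _ hEB0' hEBb hEB0 hchain h
      exact (incomp_bot' hbo hb.1 hi₀ (Ne.symm hii)).1 h3
    have h4 : Incomp lt (i, 0) (i, j) :=
      hbo.incomp_trans _ _ _ hEB0' hEB0 hEBb (incomp_bot' hbo hb.1 hi₀ (Ne.symm hii))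
        ⟨hlt, h2⟩
    exact h4.1 hchain

/-- Master transfer: `lt` agrees with prefix-length comparison on all extended
boundaries (including the conventional `(i,0)` ones). -/
lemma lt_iff_prefixLen (hbo : BoundaryOrder U₁ U₂ lt) (hL : ∀ z, 0 < L z)
    (hiff : ∀ a b, Boundary U₁ U₂ a → Boundary U₁ U₂ b →
      (lt a b ↔ prefixLen U₁ U₂ L a < prefixLen U₁ U₂ L b))
    {a b : ℕ × ℕ} (ha : EBoundary U₁ U₂ a) (hb : EBoundary U₁ U₂ b) :
    lt a b ↔ prefixLen U₁ U₂ L a < prefixLen U₁ U₂ L b := by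
  obtain ⟨i, j⟩ := a
  obtain ⟨i', j'⟩ := b
  match j, j' with
  | 0, 0 =>
    rw [prefixLen_zero, prefixLen_zero]
    simp only [Nat.lt_irrefl, iff_false]
    by_cases hii : i = i'
    · subst hii; exact hbo.irrefl _ ha
    · exact (incomp_bot' hbo ha.1 hb.1 hii).1
  | 0, (j'+1) =>
    have hbB : Boundary U₁ U₂ (i', j'+1) := ⟨hb.1, by omega, hb.2⟩
    rw [prefixLen_zero]
    simp only [lt_zero_bd hbo ha.1 hbB, true_iff]
    exact prefixLen_pos hL hbB
  | (j+1), 0 =>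
    have haB : Boundary U₁ U₂ (i, j+1) := ⟨ha.1, by omega, ha.2⟩
    rw [prefixLen_zero]
    simp only [Nat.not_lt_zero, iff_false]
    intro h
    exact hbo.irrefl _ hb (hbo.trans _ _ _ hb ha hb (lt_zero_bd hbo hb.1 haB) h)
  | (j+1), (j'+1) =>
    exact hiff _ _ ⟨ha.1, by omega, ha.2⟩ ⟨hb.1, by omega, hb.2⟩

end PrefixLen
/-! ### A context bundling all the data of a case II transformation -/

structure Ctx (X : Type*) [DecidableEq X] where
  U₁ : List X
  U₂ : List X
  U₁' : List X
  U₂' : List X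
  lt : BRel
  lt' : BRel
  x : X
  y : X
  L : X → ℕ
  L' : X → ℕ
  hL : ∀ z, 0 < L z
  hL' : ∀ z, 0 < L' z
  h₁ : U₁ ≠ []
  h₂ : U₂ ≠ []
  hbo : BoundaryOrder U₁ U₂ lt
  hbo' : BoundaryOrder U₁' U₂' lt'
  hiff : ∀ a b, Boundary U₁ U₂ a → Boundary U₁ U₂ b →
    (lt a b ↔ prefixLen U₁ U₂ L a < prefixLen U₁ U₂ L b)
  hiff' : ∀ a b, Boundary U₁' U₂' a → Boundary U₁' U₂' b →
    (lt' a b ↔ prefixLen U₁' U₂' L' a < prefixLen U₁' U₂' L' b)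
  hx : U₁.head? = some x
  hy : U₂.head? = some y
  h21 : lt (2, 1) (1, 1)
  hU₁' : U₁' = (expand x y U₁).tail
  hU₂' : U₂' = (expand x y U₂).tail
  hmatch : ∀ a b, Bpminus U₁ U₂ x a → Bpminus U₁ U₂ x b →
    (lt' a b ↔ lt (nu U₁' U₂' x a) (nu U₁' U₂' x b))

namespace Ctx

variable {X : Type*} [DecidableEq X] (C : Ctx X)

/-- Old prefix length. -/
def P (b : ℕ × ℕ) : ℕ := prefixLen C.U₁ C.U₂ C.L b

/-- New prefix length. -/
def Q (b : ℕ × ℕ) : ℕ := prefixLen C.U₁' C.U₂' C.L' b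

def w (i : ℕ) : List X := word C.U₁ C.U₂ i

def w' (i : ℕ) : List X := word C.U₁' C.U₂' i

lemma word_eq (i : ℕ) (hi : i = 1 ∨ i = 2) : C.w i = if i = 1 then C.U₁ else C.U₂ := rfl

lemma lt_iff {a b : ℕ × ℕ} (ha : EBoundary C.U₁ C.U₂ a) (hb : EBoundary C.U₁ C.U₂ b) :
    C.lt a b ↔ C.P a < C.P b :=
  lt_iff_prefixLen C.hbo C.hL C.hiff ha hb

lemma lt_iff' {a b : ℕ × ℕ} (ha : EBoundary C.U₁' C.U₂' a) (hb : EBoundary C.U₁' C.U₂' b) :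
    C.lt' a b ↔ C.Q a < C.Q b :=
  lt_iff_prefixLen C.hbo' C.hL' C.hiff' ha hb

lemma U₁_head : (C.w 1)[0]? = some C.x := by
  have := C.hx
  rwa [List.head?_eq_getElem?] at this

lemma U₂_head : (C.w 2)[0]? = some C.y := by
  have := C.hy
  rwa [List.head?_eq_getElem?] at this

lemma len₁_pos : 0 < (C.w 1).length := by
  show 0 < C.U₁.length
  exact List.length_pos_iff.mpr C.h₁

lemma len₂_pos : 0 < (C.w 2).length := by
  show 0 < C.U₂.length
  exact List.length_pos_iff.mpr C.h₂

lemma P11 : C.P (1, 1) = C.L C.x := by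
  have h := prefixLen_succ (L := C.L) (j := 0) C.U₁_head
  rw [show ((1:ℕ), (1:ℕ)) = (1, 0+1) by rfl]
  unfold P
  rw [h, prefixLen_zero]
  omega

lemma P21 : C.P (2, 1) = C.L C.y := by
  have h := prefixLen_succ (L := C.L) (j := 0) C.U₂_head
  rw [show ((2:ℕ), (1:ℕ)) = (2, 0+1) by rfl]
  unfold P
  rw [h, prefixLen_zero]
  omega

lemma bd11 : Boundary C.U₁ C.U₂ (1, 1) := ⟨Or.inl rfl, le_refl 1, C.len₁_pos⟩

lemma bd21 : Boundary C.U₁ C.U₂ (2, 1) := ⟨Or.inr rfl, le_refl 1, C.len₂_pos⟩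

lemma Lyx : C.L C.y < C.L C.x := by
  have := (C.hiff _ _ C.bd21 C.bd11).mp C.h21
  rwa [show prefixLen C.U₁ C.U₂ C.L (2,1) = C.P (2,1) from rfl,
    show prefixLen C.U₁ C.U₂ C.L (1,1) = C.P (1,1) from rfl, C.P21, C.P11] at this

lemma yx : C.y ≠ C.x := fun h => by have := C.Lyx; rw [h] at this; omega

/-- Total lengths agree. -/
lemma Ptot : C.P (1, C.U₁.length) = C.P (2, C.U₂.length) := by
  have htop := C.hbo.top
  have h1 : EBoundary C.U₁ C.U₂ (1, C.U₁.length) := ⟨Or.inl rfl, le_refl _⟩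
  have h2 : EBoundary C.U₁ C.U₂ (2, C.U₂.length) := ⟨Or.inr rfl, le_refl _⟩
  have ha := (C.lt_iff h1 h2).not.mp htop.1
  have hb := (C.lt_iff h2 h1).not.mp htop.2
  omega

/-- The second word has length at least 2. -/
lemma len₂_ge2 : 2 ≤ (C.w 2).length := by
  by_contra h
  have hl2 : C.U₂.length = 1 := by
    have h0 := C.len₂_pos
    have h2 : (C.w 2).length = C.U₂.length := rfl
    omega
  have h1 : C.P (1, 1) ≤ C.P (1, C.U₁.length) :=
    prefixLen_le C.hL (List.length_pos_iff.mpr C.h₁) (le_refl _)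
  have h3 := C.Ptot
  rw [hl2] at h3
  have h4 := C.P11
  have h5 := C.P21
  have h6 := C.Lyx
  omega

end Ctx
section Helper

variable {X : Type*}

lemma take_one_of_head {l : List X} {a : X} (h : l[0]? = some a) : l.take 1 = [a] := by
  cases l with
  | nil => simp at h
  | cons b t => simp at h; simp [h]

end Helper

namespace Ctx

variable {X : Type*} [DecidableEq X] (C : Ctx X)

lemma expand_eq {i : ℕ} (hi : i = 1 ∨ i = 2) :
    expand C.x C.y (C.w i) = C.y :: C.w' i := by
  rcases hi with rfl | rfl
  · obtain ⟨t, ht⟩ : ∃ t, C.U₁ = C.x :: t := by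
      cases h : C.U₁ with
      | nil =>
        have hh := C.hx
        rw [h] at hh
        simp at hh
      | cons b t =>
        have := C.hx
        rw [h] at this
        simp at this
        exact ⟨t, by rw [this]⟩
    show expand C.x C.y C.U₁ = C.y :: C.U₁'
    rw [C.hU₁', ht, expand_cons]
    simp
  · obtain ⟨t, ht⟩ : ∃ t, C.U₂ = C.y :: t := by
      cases h : C.U₂ with
      | nil => exact absurd h C.h₂
      | cons b t =>
        have := C.hy
        rw [h] at this
        simp at this
        exact ⟨t, by rw [this]⟩
    show expand C.x C.y C.U₂ = C.y :: C.U₂'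
    rw [C.hU₂', ht, expand_cons]
    simp [C.yx]

lemma len' {i : ℕ} (hi : i = 1 ∨ i = 2) :
    (C.w' i).length + 1 = (C.w i).length + (C.w i).count C.x := by
  have h := congrArg List.length (C.expand_eq hi)
  rw [length_expand] at h
  simp at h
  omega

lemma get' {i : ℕ} (hi : i = 1 ∨ i = 2) (m : ℕ) :
    (C.w' i)[m]? = (expand C.x C.y (C.w i))[m+1]? := by
  rw [C.expand_eq hi]
  simp

lemma count' {i : ℕ} (hi : i = 1 ∨ i = 2) (m : ℕ) :
    ((C.w' i).take m).count C.x = ((expand C.x C.y (C.w i)).take (m+1)).count C.x := by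
  rw [C.expand_eq hi, List.take_succ_cons, List.count_cons]
  simp [C.yx]

lemma cnt_expand_take {i : ℕ} (hi : i = 1 ∨ i = 2) {j : ℕ} (hj : j ≤ (C.w i).length) :
    ((expand C.x C.y (C.w i)).take (j + ((C.w i).take j).count C.x)).count C.x
      = ((C.w i).take j).count C.x := by
  rw [take_expand _ _ _ j hj]
  exact count_expand _ _ C.yx _

lemma len_w'_eq (i : ℕ) : (C.w' i).length = (C.w' i).length := rfl

lemma cntw'_eq (k : ℕ) (i : ℕ) :
    ((C.w' i).take k).count C.x = ((C.w' i).take k).count C.x := rfl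

/-- Classification of new boundaries: case A (image of `μ`) or case B (mid-pair). -/
lemma classify {i k : ℕ} (hb : Boundary C.U₁' C.U₂' (i, k)) :
    ∃ j a, 1 ≤ j ∧ j ≤ (C.w i).length ∧
      nu C.U₁' C.U₂' C.x (i, k) = (i, j) ∧ (C.w i)[j-1]? = some a ∧
      ((mu C.U₁ C.U₂ C.x (i, j) = (i, k) ∧ (i, j) ≠ (2, 1) ∧
          (C.w' i)[k-1]? = some (if a = C.x then C.x else a) ∧
          (∀ b, (C.w' i)[k]? = some b → b ≠ C.x)) ∨
        (a = C.x ∧ 2 ≤ j ∧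
          (C.w' i)[k-1]? = some C.y ∧ (C.w' i)[k]? = some C.x ∧
          k + 1 ≤ (C.w' i).length ∧
          mu C.U₁ C.U₂ C.x (i, j) = (i, k+1) ∧
          nu C.U₁' C.U₂' C.x (i, k+1) = (i, j) ∧
          (2 ≤ k → mu C.U₁ C.U₂ C.x (i, j-1) = (i, k-1) ∧ (i, j-1) ≠ (2, 1)) ∧
          (k = 1 → i = 2 ∧ j = 2))) := by
  obtain ⟨hi, hk1, hkl⟩ := hb
  dsimp only at hi hk1 hkl
  replace hkl : k ≤ (C.w' i).length := hkl
  have hlew : (expand C.x C.y (C.w i)).length = (C.w' i).length + 1 := by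
    rw [C.expand_eq hi]; simp
  obtain ⟨j, hj1, hjl, hcase⟩ := expand_dichotomy C.x C.y (C.w i) (k+1) (by omega)
    (by omega)
  set c := ((C.w i).take j).count C.x with hc
  rcases hcase with hA | ⟨hB, hBx⟩
  · -- Case A : k + 1 = j + c
    have hcnt' : ((C.w' i).take k).count C.x = c := by
      rw [C.count' hi k, show k + 1 = j + c from hA, cnt_expand_take C hi hjl]
    have hnu : nu C.U₁' C.U₂' C.x (i, k) = (i, j) := by
      show (i, k - ((C.w' i).take k).count C.x + 1) = (i, j)
      rw [hcnt']
      exact Prod.ext rfl (by omega)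
    obtain ⟨a, ha⟩ : ∃ a, (C.w i)[j-1]? = some a :=
      ⟨(C.w i)[j-1]'(by omega), List.getElem?_eq_getElem (by omega)⟩
    have hcj : c = ((C.w i).take (j-1)).count C.x + (if a = C.x then 1 else 0) := by
      have := count_take_succ C.x (C.w i) (j-1) a ha
      rw [show j - 1 + 1 = j by omega] at this
      exact this
    refine ⟨j, a, hj1, hjl, hnu, ha, Or.inl ⟨?_, ?_, ?_, ?_⟩⟩
    · show (i, j + ((C.w i).take j).count C.x - 1) = (i, k)
      exact Prod.ext rfl (by show j + c - 1 = k; omega)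
    · intro hpe
      rw [Prod.mk.injEq] at hpe
      obtain ⟨rfl, rfl⟩ := hpe
      have h2 : ((C.w 2).take 1).count C.x = 0 := by
        rw [take_one_of_head C.U₂_head]
        simp [List.count_cons, C.yx, Ne.symm C.yx]
      rw [hc, h2] at hA
      omega
    · rw [C.get' hi (k-1), show k - 1 + 1 = k from by omega]
      by_cases hax : a = C.x
      · have := getElem?_expand_at' C.x C.y (C.w i) (j-1) (by rw [← hax]; exact ha)
        rw [show j - 1 + ((C.w i).take (j-1)).count C.x + 1 = k by
          subst hax; simp at hcj; omega] at this
        rw [this]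
        simp [hax]
      · have := getElem?_expand_at C.x C.y (C.w i) (j-1) a ha
        rw [show j - 1 + ((C.w i).take (j-1)).count C.x = k by
          simp [hax] at hcj; omega] at this
        rw [this]
        simp [hax]
    · intro b hbx
      rw [C.get' hi k] at hbx
      rcases Nat.eq_or_lt_of_le hjl with hjeq | hjlt
      · exfalso
        have hkl1 : k + 1 = (expand C.x C.y (C.w i)).length := by
          rw [hlew]
          have hcc : c = (C.w i).count C.x := by
            rw [hc, hjeq, List.take_of_length_le (le_refl _)]
          have hll := C.len' hi
          omega
        rw [List.getElem?_eq_none (by omega)] at hbx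
        simp at hbx
      · obtain ⟨a', ha'⟩ : ∃ a', (C.w i)[j]? = some a' :=
          ⟨(C.w i)[j]'(by omega), List.getElem?_eq_getElem (by omega)⟩
        have := getElem?_expand_at C.x C.y (C.w i) j a' ha'
        rw [show j + ((C.w i).take j).count C.x = k + 1 from by omega] at this
        rw [this] at hbx
        injection hbx with hbx
        subst hbx
        by_cases h : a' = C.x
        · simpa [h] using C.yx
        · simpa [h] using h
  · -- Case B : k + 2 = j + c, old letter x at j
    have hj2 : 2 ≤ j := by
      by_contra h
      have : j = 1 := by omega
      subst this
      have : c ≤ 1 := by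
        have : ((C.w i).take 1).count C.x ≤ ((C.w i).take 1).length := List.count_le_length
        simp at this
        omega
      omega
    have hcj : c = ((C.w i).take (j-1)).count C.x + 1 := by
      have := count_take_succ C.x (C.w i) (j-1) C.x hBx
      rw [show j - 1 + 1 = j by omega] at this
      simp at this
      omega
    have hEj1 : j - 1 + ((C.w i).take (j-1)).count C.x = k := by omega
    have hmid : (expand C.x C.y (C.w i))[k]? = some C.y := by
      have := getElem?_expand_at C.x C.y (C.w i) (j-1) C.x hBx
      rw [hEj1] at this
      simpa using this
    have hnext : (expand C.x C.y (C.w i))[k+1]? = some C.x := by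
      have := getElem?_expand_at' C.x C.y (C.w i) (j-1) hBx
      rw [hEj1] at this
      exact this
    have hk1l : k + 1 ≤ (C.w' i).length := by
      have := (List.getElem?_eq_some_iff.mp hnext).1
      omega
    have hcntk : ((C.w' i).take k).count C.x = ((C.w i).take (j-1)).count C.x := by
      rw [C.count' hi k]
      have hstep := count_take_succ C.x (expand C.x C.y (C.w i)) k C.y hmid
      rw [hstep, ← hEj1, cnt_expand_take C hi (by omega)]
      simp [C.yx]
    have hcntk1 : ((C.w' i).take (k+1)).count C.x = c := by
      rw [C.count' hi (k+1), show k + 1 + 1 = j + c from by omega,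
        cnt_expand_take C hi hjl]
    have hnu : nu C.U₁' C.U₂' C.x (i, k) = (i, j) := by
      show (i, k - ((C.w' i).take k).count C.x + 1) = (i, j)
      rw [hcntk]
      exact Prod.ext rfl (by omega)
    refine ⟨j, C.x, hj1, hjl, hnu, hBx, Or.inr ⟨rfl, hj2, ?_, ?_, hk1l, ?_, ?_, ?_, ?_⟩⟩
    · rw [C.get' hi (k-1), show k - 1 + 1 = k from by omega]
      exact hmid
    · rw [C.get' hi k]
      exact hnext
    · show (i, j + ((C.w i).take j).count C.x - 1) = (i, k+1)
      exact Prod.ext rfl (by show j + c - 1 = k + 1; omega)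
    · show (i, k + 1 - ((C.w' i).take (k+1)).count C.x + 1) = (i, j)
      rw [C.cntw'_eq, hcntk1]
      exact Prod.ext rfl (by omega)
    · intro hk2
      constructor
      · show (i, j - 1 + ((C.w i).take (j-1)).count C.x - 1) = (i, k-1)
        exact Prod.ext rfl (by omega)
      · intro hpe
        rw [Prod.mk.injEq] at hpe
        have hi2 : i = 2 := hpe.1
        have hj2' : j = 2 := by omega
        subst hi2
        subst hj2'
        have h2 : ((C.w 2).take 1).count C.x = 0 := by
          rw [take_one_of_head C.U₂_head]
          simp [List.count_cons, C.yx, Ne.symm C.yx]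
        rw [show (2:ℕ) - 1 = 1 from rfl, h2] at hEj1
        omega
    · intro hk1'
      subst hk1'
      have hj2' : j = 2 := by omega
      subst hj2'
      have hcnt1 : ((C.w i).take 1).count C.x = 0 := by
        rw [show (2:ℕ) - 1 = 1 from rfl] at hEj1
        omega
      rcases hi with rfl | rfl
      · exfalso
        have h1c : ((C.w 1).take 1).count C.x = 1 := by
          rw [take_one_of_head C.U₁_head]
          simp
        omega
      · exact ⟨rfl, rfl⟩

end Ctx
section MirrorsCuts

variable {X : Type*} [DecidableEq X] {U₁ U₂ : List X} {lt : BRel} {L : X → ℕ}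

lemma prefixLen_pred {i j : ℕ} {z : X} (hb : Boundary U₁ U₂ (i, j))
    (hz : letter U₁ U₂ (i, j) = some z) :
    prefixLen U₁ U₂ L (i, j) = prefixLen U₁ U₂ L (i, j-1) + L z := by
  have hj := hb.2.1
  have h : (word U₁ U₂ i)[j-1]? = some z := hz
  have := prefixLen_succ (L := L) h
  rw [show j - 1 + 1 = j by omega] at this
  exact this

lemma EB_pred {i j : ℕ} (hb : Boundary U₁ U₂ (i, j)) : EBoundary U₁ U₂ (i, j-1) := by
  have h3 : j ≤ (word U₁ U₂ i).length := hb.2.2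
  refine ⟨hb.1, ?_⟩
  show j - 1 ≤ (word U₁ U₂ i).length
  omega

lemma EB_of_bd {b : ℕ × ℕ} (hb : Boundary U₁ U₂ b) : EBoundary U₁ U₂ b := ⟨hb.1, hb.2.2⟩

lemma letter_some {i j : ℕ} (hb : Boundary U₁ U₂ (i, j)) :
    ∃ z, letter U₁ U₂ (i, j) = some z := by
  have hjl : j ≤ (word U₁ U₂ i).length := hb.2.2
  have hj1 : 1 ≤ j := hb.2.1
  have h : (word U₁ U₂ i)[j-1]? = some ((word U₁ U₂ i)[j-1]'(by omega)) :=
    List.getElem?_eq_getElem (by omega)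
  exact ⟨_, h⟩

lemma mirrors_iff (hbo : BoundaryOrder U₁ U₂ lt) (hL : ∀ z, 0 < L z)
    (hiff : ∀ a b, Boundary U₁ U₂ a → Boundary U₁ U₂ b →
      (lt a b ↔ prefixLen U₁ U₂ L a < prefixLen U₁ U₂ L b))
    {a b : ℕ × ℕ} (ha : Boundary U₁ U₂ a) (hb : Boundary U₁ U₂ b) :
    Mirrors U₁ U₂ lt a b ↔
      (letter U₁ U₂ a = letter U₁ U₂ b ∧
        prefixLen U₁ U₂ L a ≠ prefixLen U₁ U₂ L b) := by
  obtain ⟨i, j⟩ := a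
  obtain ⟨i', j'⟩ := b
  constructor
  · rintro ⟨-, -, hlet, hcmp⟩
    refine ⟨hlet, ?_⟩
    obtain ⟨z, hz⟩ := letter_some ha
    have hz' : letter U₁ U₂ (i', j') = some z := by rw [← hlet]; exact hz
    have hpa := prefixLen_pred (L := L) ha hz
    have hpb := prefixLen_pred (L := L) hb hz'
    rcases hcmp with h | h
    · intro he
      apply h
      constructor
      · intro hl
        have := (lt_iff_prefixLen hbo hL hiff (EB_of_bd ha) (EB_of_bd hb)).mp hl
        omega
      · intro hl
        have := (lt_iff_prefixLen hbo hL hiff (EB_of_bd hb) (EB_of_bd ha)).mp hl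
        omega
    · intro he
      apply h
      constructor
      · intro hl
        have := (lt_iff_prefixLen hbo hL hiff (EB_pred ha) (EB_pred hb)).mp hl
        omega
      · intro hl
        have := (lt_iff_prefixLen hbo hL hiff (EB_pred hb) (EB_pred ha)).mp hl
        omega
  · rintro ⟨hlet, hne⟩
    refine ⟨ha, hb, hlet, Or.inl ?_⟩
    rintro ⟨h1, h2⟩
    rw [lt_iff_prefixLen hbo hL hiff (EB_of_bd ha) (EB_of_bd hb)] at h1
    rw [lt_iff_prefixLen hbo hL hiff (EB_of_bd hb) (EB_of_bd ha)] at h2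
    omega

lemma cuts_iff (hbo : BoundaryOrder U₁ U₂ lt) (hL : ∀ z, 0 < L z)
    (hiff : ∀ a b, Boundary U₁ U₂ a → Boundary U₁ U₂ b →
      (lt a b ↔ prefixLen U₁ U₂ L a < prefixLen U₁ U₂ L b))
    {a b : ℕ × ℕ} (ha : Boundary U₁ U₂ a) (hb : Boundary U₁ U₂ b) :
    Cuts U₁ U₂ lt a b ↔ (a ≠ b ∧
      prefixLen U₁ U₂ L (a.1, a.2 - 1) < prefixLen U₁ U₂ L b ∧
      prefixLen U₁ U₂ L (b.1, b.2 - 1) < prefixLen U₁ U₂ L a) := by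
  obtain ⟨i, j⟩ := a
  obtain ⟨i', j'⟩ := b
  constructor
  · rintro ⟨-, -, hne, h1, h2⟩
    exact ⟨hne, (lt_iff_prefixLen hbo hL hiff (EB_pred ha) (EB_of_bd hb)).mp h1,
      (lt_iff_prefixLen hbo hL hiff (EB_pred hb) (EB_of_bd ha)).mp h2⟩
  · rintro ⟨hne, h1, h2⟩
    exact ⟨ha, hb, hne, (lt_iff_prefixLen hbo hL hiff (EB_pred ha) (EB_of_bd hb)).mpr h1,
      (lt_iff_prefixLen hbo hL hiff (EB_pred hb) (EB_of_bd ha)).mpr h2⟩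

end MirrorsCuts

namespace Ctx

variable {X : Type*} [DecidableEq X] (C : Ctx X)

/-- `ν` of a new boundary is an old boundary. -/
lemma nu_bd {i k : ℕ} (hb : Boundary C.U₁' C.U₂' (i, k)) :
    Boundary C.U₁ C.U₂ (nu C.U₁' C.U₂' C.x (i, k)) := by
  obtain ⟨j, a, hj1, hjl, hnu, -, -⟩ := C.classify hb
  rw [hnu]
  exact ⟨hb.1, hj1, hjl⟩

/-- `ν` of a new boundary lies strictly after `(2,1)` in prefix length. -/
lemma P_nu_gt_Ly {i k : ℕ} (hb : Boundary C.U₁' C.U₂' (i, k)) :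
    C.L C.y < C.P (nu C.U₁' C.U₂' C.x (i, k)) := by
  obtain ⟨j, a, hj1, hjl, hnu, ha, hcase⟩ := C.classify hb
  rw [hnu]
  have hi := hb.1
  dsimp only at hi
  rcases hi with rfl | rfl
  · have h1 : C.P (1, 1) ≤ C.P (1, j) := prefixLen_le C.hL hj1 hjl
    have := C.P11
    have := C.Lyx
    omega
  · have hj2 : 2 ≤ j := by
      rcases hcase with ⟨-, hne, -, -⟩ | ⟨-, hj2, -⟩
      · rcases Nat.eq_or_lt_of_le hj1 with h | h
        · exact absurd (by rw [← h]) hne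
        · omega
      · exact hj2
    have h1 : C.P (2, 1) < C.P (2, j) := prefixLen_lt C.hL (by omega) hjl
    have := C.P21
    omega

lemma nu_ne_21 {i k : ℕ} (hb : Boundary C.U₁' C.U₂' (i, k)) :
    nu C.U₁' C.U₂' C.x (i, k) ≠ (2, 1) := by
  intro h
  have := C.P_nu_gt_Ly hb
  rw [h] at this
  have := C.P21
  omega

/-- For mid-pair boundaries (case B), `ν` lies strictly after `(1,1)`. -/
lemma P_nu_gt_Lx {i k j : ℕ} (hb : Boundary C.U₁' C.U₂' (i, k))
    (hj1 : 1 ≤ j) (hjl : j ≤ (C.w i).length)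
    (hnu : nu C.U₁' C.U₂' C.x (i, k) = (i, j)) (hj2 : 2 ≤ j)
    (hx : (C.w i)[j-1]? = some C.x) :
    C.L C.x < C.P (nu C.U₁' C.U₂' C.x (i, k)) := by
  rw [hnu]
  have hbj : Boundary C.U₁ C.U₂ (i, j) := ⟨hb.1, hj1, hjl⟩
  have hp := prefixLen_pred (L := C.L) hbj hx
  have hbj1 : Boundary C.U₁ C.U₂ (i, j-1) := by
    refine ⟨hb.1, show 1 ≤ j - 1 by omega, ?_⟩
    show j - 1 ≤ (C.w i).length
    omega
  have hpos : 0 < C.P (i, j-1) := prefixLen_pos C.hL hbj1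
  show C.L C.x < C.P (i, j)
  have : C.P (i,j) = C.P (i, j-1) + C.L C.x := hp
  omega

/-- Order transfer between new and old boundaries in `B'⁻`. -/
lemma Q_lt_iff {a' b' : ℕ × ℕ} (ha : Boundary C.U₁' C.U₂' a') (hb : Boundary C.U₁' C.U₂' b')
    (hma : Bpminus C.U₁ C.U₂ C.x a') (hmb : Bpminus C.U₁ C.U₂ C.x b') :
    Q C a' < Q C b' ↔ C.P (nu C.U₁' C.U₂' C.x a') < C.P (nu C.U₁' C.U₂' C.x b') := by
  obtain ⟨ia, ka⟩ := a'
  obtain ⟨ib, kb⟩ := b'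
  exact Iff.trans (Iff.trans ((C.hiff' _ _ ha hb).symm) (C.hmatch _ _ hma hmb))
    (C.hiff _ _ (C.nu_bd ha) (C.nu_bd hb))

lemma Q_eq_iff {a' b' : ℕ × ℕ} (ha : Boundary C.U₁' C.U₂' a') (hb : Boundary C.U₁' C.U₂' b')
    (hma : Bpminus C.U₁ C.U₂ C.x a') (hmb : Bpminus C.U₁ C.U₂ C.x b') :
    Q C a' = Q C b' ↔ C.P (nu C.U₁' C.U₂' C.x a') = C.P (nu C.U₁' C.U₂' C.x b') := by
  have h1 := C.Q_lt_iff ha hb hma hmb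
  have h2 := C.Q_lt_iff hb ha hmb hma
  omega

end Ctx
namespace Ctx

variable {X : Type*} [DecidableEq X] (C : Ctx X)

lemma nu_mu {i j : ℕ} (hi : i = 1 ∨ i = 2) (hj1 : 1 ≤ j) (hjl : j ≤ (C.w i).length) :
    nu C.U₁' C.U₂' C.x (mu C.U₁ C.U₂ C.x (i, j)) = (i, j) := by
  have h2 : ((C.w' i).take (j + ((C.w i).take j).count C.x - 1)).count C.x
      = ((C.w i).take j).count C.x := by
    rw [C.count' hi, show (j + ((C.w i).take j).count C.x - 1) + 1
      = j + ((C.w i).take j).count C.x from by omega, cnt_expand_take C hi hjl]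
  show (i, (j + ((C.w i).take j).count C.x - 1)
      - ((C.w' i).take (j + ((C.w i).take j).count C.x - 1)).count C.x + 1) = (i, j)
  rw [h2]
  exact Prod.ext rfl (by omega)

/-- Push a new boundary to one in `B'⁻` with the same `ν`-image, weakly later. -/
lemma minusify {i k : ℕ} (hb : Boundary C.U₁' C.U₂' (i, k)) :
    ∃ m, Boundary C.U₁' C.U₂' (i, m) ∧ Bpminus C.U₁ C.U₂ C.x (i, m) ∧
      Q C (i, k) ≤ Q C (i, m) ∧
      nu C.U₁' C.U₂' C.x (i, m) = nu C.U₁' C.U₂' C.x (i, k) := by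
  obtain ⟨j, a, hj1, hjl, hnu, ha, hcase⟩ := C.classify hb
  rcases hcase with ⟨hmu, hne, -, -⟩ | ⟨rfl, hj2, -, -, hk1l, hmu, hnu1, -, -⟩
  · exact ⟨k, hb, ⟨(i, j), ⟨⟨hb.1, hj1, hjl⟩, hne⟩, hmu⟩, le_refl _, rfl⟩
  · refine ⟨k+1, ⟨hb.1, by omega, hk1l⟩, ⟨(i, j), ⟨⟨hb.1, hj1, hjl⟩, ?_⟩, hmu⟩, ?_, ?_⟩
    · intro hq
      rw [Prod.mk.injEq] at hq
      omega
    · exact prefixLen_le C.hL' (by omega) hk1l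
    · rw [hnu1, hnu]

/-- One half of the cut-transfer property. -/
lemma cut_half {i k i' k' : ℕ} (hb : Boundary C.U₁' C.U₂' (i, k))
    (hc : Boundary C.U₁' C.U₂' (i', k'))
    (h : Q C (i, k - 1) < Q C (i', k')) :
    C.P ((nu C.U₁' C.U₂' C.x (i, k)).1, (nu C.U₁' C.U₂' C.x (i, k)).2 - 1)
      < C.P (nu C.U₁' C.U₂' C.x (i', k')) := by
  obtain ⟨m, hmbd, hmm, hQle, hnum⟩ := C.minusify hc
  rw [← hnum]
  have hLy : C.L C.y < C.P (nu C.U₁' C.U₂' C.x (i', m)) := C.P_nu_gt_Ly hmbd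
  have hPpos : 0 < C.P (nu C.U₁' C.U₂' C.x (i', m)) :=
    prefixLen_pos C.hL (C.nu_bd hmbd)
  obtain ⟨jb, ab, hjb1, hjbl, hnub, hab, hcaseb⟩ := C.classify hb
  rw [hnub]
  dsimp only
  have hk1 : 1 ≤ k := hb.2.1
  have hkl : k ≤ (C.w' i).length := hb.2.2
  by_cases hk : k = 1
  · -- k = 1 : the predecessor is `(i,0)` or `(2,1)`.
    subst hk
    rcases hcaseb with ⟨hmu, hne, -, -⟩ | ⟨-, -, -, -, -, -, -, -, hk1b⟩
    · have hmu2 : jb + ((C.w i).take jb).count C.x - 1 = 1 := congrArg Prod.snd hmu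
      rcases hb.1 with hi1 | hi2
      · -- side 1 : jb = 1
        have hcnt1 : ((C.w 1).take 1).count C.x = 1 := by
          rw [take_one_of_head C.U₁_head]; simp
        have hpre : ((C.w 1).take 1).count C.x ≤ ((C.w 1).take jb).count C.x := by
          have hpfx : (C.w 1).take 1 <+: (C.w 1).take jb := by
            rw [show (C.w 1).take 1 = ((C.w 1).take jb).take 1 by
              rw [List.take_take]; congr 1; omega]
            exact List.take_prefix _ _
          exact hpfx.count_le _
        dsimp only at hi1
        subst hi1
        have hjb : jb = 1 := by omega
        rw [hjb]
        simpa [P, prefixLen] using hPpos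
      · -- side 2 : jb = 2, predecessor is (2,1)
        dsimp only at hi2
        subst hi2
        have hjb : jb = 2 := by
          rcases Nat.eq_or_lt_of_le hjb1 with h1 | h1
          · exact absurd (by rw [← h1]) hne
          · omega
        rw [hjb]
        show C.P (2, 1) < _
        rw [C.P21]
        exact hLy
    · obtain ⟨hi2, hjb2⟩ := hk1b rfl
      subst hi2
      rw [hjb2]
      show C.P (2, 1) < _
      rw [C.P21]
      exact hLy
  · -- k ≥ 2
    have hk2 : 2 ≤ k := by omega
    have hbk1 : Boundary C.U₁' C.U₂' (i, k-1) := ⟨hb.1, by omega, by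
      show k - 1 ≤ (C.w' i).length; omega⟩
    obtain ⟨jp, ap, hjp1, hjpl, hnup, hap, hcasep⟩ := C.classify hbk1
    -- jb - 1 ≤ jp
    have hjbv : k - ((C.w' i).take k).count C.x + 1 = jb := congrArg Prod.snd hnub
    have hjpv : (k-1) - ((C.w' i).take (k-1)).count C.x + 1 = jp := congrArg Prod.snd hnup
    obtain ⟨zb, hzb⟩ : ∃ z, (C.w' i)[k-1]? = some z := by
      rcases hcaseb with ⟨-, -, hlet, -⟩ | ⟨-, -, hlet, -⟩ <;> exact ⟨_, hlet⟩
    have hcnt_step : ((C.w' i).take k).count C.x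
        = ((C.w' i).take (k-1)).count C.x + (if zb = C.x then 1 else 0) := by
      have := count_take_succ C.x (C.w' i) (k-1) zb hzb
      rw [show k - 1 + 1 = k from by omega] at this
      exact this
    have hjbjp : jb - 1 ≤ jp ∧ jp ≤ jb := by
      by_cases hz : zb = C.x <;> simp [hz] at hcnt_step <;> omega
    rcases hcasep with ⟨hmup, hnep, -, -⟩ | ⟨hapx, hjp2, -, -, -, hmup, hnup1, hpredp, hk1p⟩
    · -- (i, k-1) is in B'⁻ : transfer directly
      have hQ : Q C (i, k-1) < Q C (i', m) := lt_of_lt_of_le h hQle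
      have hPt := (C.Q_lt_iff hbk1 hmbd
        ⟨(i, jp), ⟨⟨hb.1, hjp1, hjpl⟩, hnep⟩, hmup⟩ hmm).mp hQ
      rw [hnup] at hPt
      have hle : C.P (i, jb - 1) ≤ C.P (i, jp) :=
        prefixLen_le C.hL (by omega) hjpl
      omega
    · -- (i, k-1) is a mid boundary
      have hjbjp' : jb = jp := by
        have h1 : nu C.U₁' C.U₂' C.x (i, k) = (i, jp) := by
          rw [show k = (k-1) + 1 from by omega]
          exact hnup1
        rw [hnub] at h1
        have := congrArg Prod.snd h1
        simpa using this
      by_cases hk3 : k = 2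
      · -- k = 2 : predecessor is (2,1)
        obtain ⟨hi2, hjp2'⟩ := hk1p (by omega)
        subst hi2
        rw [hjbjp', hjp2']
        show C.P (2, 1) < _
        rw [C.P21]
        exact hLy
      · -- k ≥ 3
        obtain ⟨hmup2, hnep2⟩ := hpredp (by omega)
        have hbd2 : Boundary C.U₁' C.U₂' (i, k-2) := ⟨hb.1, by omega, by
          show k - 2 ≤ (C.w' i).length; omega⟩
        have hQ2 : Q C (i, k-2) < Q C (i', m) := by
          have hstrict : Q C (i, k-2) < Q C (i, k-1) :=
            prefixLen_lt C.hL' (by omega) (by show k - 1 ≤ (C.w' i).length; omega)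
          omega
        rw [show k - 1 - 1 = k - 2 from by omega] at hmup2
        have hnu2 : nu C.U₁' C.U₂' C.x (i, k-2) = (i, jp-1) := by
          rw [← hmup2]
          exact C.nu_mu hb.1 (by omega) (by omega)
        have hPt := (C.Q_lt_iff hbd2 hmbd
          ⟨(i, jp-1), ⟨⟨hb.1, show 1 ≤ jp - 1 from by omega,
            show jp - 1 ≤ (C.w i).length from by omega⟩, hnep2⟩, hmup2⟩ hmm).mp hQ2
        rw [hnu2] at hPt
        rw [hjbjp']
        exact hPt

/-- Cuts transfer along `ν`. -/
lemma cut_transfer {b' c' : ℕ × ℕ} (hcut : Cuts C.U₁' C.U₂' C.lt' b' c') :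
    Cuts C.U₁ C.U₂ C.lt (nu C.U₁' C.U₂' C.x b') (nu C.U₁' C.U₂' C.x c') := by
  obtain ⟨hbb, hcb, hne, hlt1, hlt2⟩ := hcut
  obtain ⟨i, k⟩ := b'
  obtain ⟨i', k'⟩ := c'
  have h1 : Q C (i, k - 1) < Q C (i', k') :=
    (C.lt_iff' (EB_pred hbb) (EB_of_bd hcb)).mp hlt1
  have h2 : Q C (i', k' - 1) < Q C (i, k) :=
    (C.lt_iff' (EB_pred hcb) (EB_of_bd hbb)).mp hlt2
  rw [cuts_iff C.hbo C.hL C.hiff (C.nu_bd hbb) (C.nu_bd hcb)]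
  refine ⟨?_, C.cut_half hbb hcb h1, C.cut_half hcb hbb h2⟩
  -- ν b' ≠ ν c'
  obtain ⟨jb, ab, hjb1, hjbl, hnub, hab, hcaseb⟩ := C.classify hbb
  obtain ⟨jc, ac, hjc1, hjcl, hnuc, hac, hcasec⟩ := C.classify hcb
  rw [hnub, hnuc]
  intro heq
  rcases hcaseb with ⟨hmub, -, -, -⟩ | ⟨-, -, -, -, -, hmub, -, -, -⟩ <;>
    rcases hcasec with ⟨hmuc, -, -, -⟩ | ⟨-, -, -, -, -, hmuc, -, -, -⟩ <;>
      rw [heq, hmuc] at hmub <;> rw [Prod.mk.injEq] at hmub <;>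
        obtain ⟨rfl, hkk⟩ := hmub
  · exact hne (Prod.ext rfl (by omega))
  · rw [show k - 1 = k' from by omega] at h1
    exact lt_irrefl _ h1
  · rw [show k' - 1 = k from by omega] at h2
    exact lt_irrefl _ h2
  · exact hne (Prod.ext rfl (by omega))

end Ctx
section SumHelpers

variable {X : Type*} [DecidableEq X]

lemma mem_boundaryFinset {U₁ U₂ : List X} {b : ℕ × ℕ} :
    b ∈ boundaryFinset U₁ U₂ ↔ Boundary U₁ U₂ b := by
  obtain ⟨i, j⟩ := b
  simp only [boundaryFinset, Finset.mem_union, Finset.mem_image, Finset.mem_range]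
  constructor
  · rintro (⟨j', hj', he⟩ | ⟨j', hj', he⟩) <;> rw [Prod.mk.injEq] at he <;>
      obtain ⟨rfl, rfl⟩ := he
    · exact ⟨Or.inl rfl, by omega, by show j' + 1 ≤ U₁.length; omega⟩
    · exact ⟨Or.inr rfl, by omega, by show j' + 1 ≤ U₂.length; omega⟩
  · rintro ⟨hi, h1, h2⟩
    rcases hi with rfl | rfl
    · exact Or.inl ⟨j - 1, by have : j ≤ U₁.length := h2; omega,
        by rw [Prod.mk.injEq]; omega⟩
    · exact Or.inr ⟨j - 1, by have : j ≤ U₂.length := h2; omega,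
        by rw [Prod.mk.injEq]; omega⟩

lemma sum_map_le {S T : Finset (ℕ × ℕ)} {g : ℕ × ℕ → ℕ × ℕ} {f : ℕ × ℕ → ℕ}
    (hmap : ∀ a ∈ S, g a ∈ T) (hinj : ∀ a ∈ S, ∀ b ∈ S, g a = g b → a = b) :
    (S.sum fun a => f (g a)) ≤ T.sum f := by
  rw [← Finset.sum_image hinj]
  exact Finset.sum_le_sum_of_subset fun t ht => by
    obtain ⟨a, ha, rfl⟩ := Finset.mem_image.mp ht
    exact hmap a ha

end SumHelpers

namespace Ctx

variable {X : Type*} [DecidableEq X] (C : Ctx X)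

lemma mu_nu_of_minus {d' : ℕ × ℕ} (h : Bpminus C.U₁ C.U₂ C.x d') :
    mu C.U₁ C.U₂ C.x (nu C.U₁' C.U₂' C.x d') = d' := by
  obtain ⟨b, ⟨hbd, hne⟩, rfl⟩ := h
  obtain ⟨i, j⟩ := b
  rw [C.nu_mu hbd.1 hbd.2.1 hbd.2.2]

lemma letter_old_11 : letter C.U₁ C.U₂ (1, 1) = some C.x := C.U₁_head

lemma letter_old_21 : letter C.U₁ C.U₂ (2, 1) = some C.y := C.U₂_head

lemma cuts_11_21 : Cuts C.U₁ C.U₂ C.lt (1, 1) (2, 1) := by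
  rw [cuts_iff C.hbo C.hL C.hiff C.bd11 C.bd21]
  refine ⟨by decide, ?_, ?_⟩
  · show C.P (1, 0) < C.P (2, 1)
    have h0 : C.P (1, 0) = 0 := prefixLen_zero 1
    have hp : 0 < C.P (2, 1) := prefixLen_pos C.hL C.bd21
    omega
  · show C.P (2, 0) < C.P (1, 1)
    have h0 : C.P (2, 0) = 0 := prefixLen_zero 2
    have hp : 0 < C.P (1, 1) := prefixLen_pos C.hL C.bd11
    omega

lemma cuts_21_11 : Cuts C.U₁ C.U₂ C.lt (2, 1) (1, 1) := by
  rw [cuts_iff C.hbo C.hL C.hiff C.bd21 C.bd11]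
  refine ⟨by decide, ?_, ?_⟩
  · show C.P (2, 0) < C.P (1, 1)
    have h0 : C.P (2, 0) = 0 := prefixLen_zero 2
    have hp : 0 < C.P (1, 1) := prefixLen_pos C.hL C.bd11
    omega
  · show C.P (1, 0) < C.P (2, 1)
    have h0 : C.P (1, 0) = 0 := prefixLen_zero 1
    have hp : 0 < C.P (2, 1) := prefixLen_pos C.hL C.bd21
    omega

/-- The mirror-sum of `(1,1)` is bounded by `f(2,1) - 1`. -/
lemma sum_M11_lt_f21 {f : ℕ × ℕ → ℕ} (hf : IsFecundity C.U₁ C.U₂ C.lt f) :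
    ((boundaryFinset C.U₁ C.U₂).filter fun d =>
      Mirrors C.U₁ C.U₂ C.lt (1, 1) d).sum f + 1 ≤ f (2, 1) := by
  have h := hf (2, 1) (mem_boundaryFinset.mpr C.bd21)
  have hmem : (1, 1) ∈ (boundaryFinset C.U₁ C.U₂).filter
      fun c => Cuts C.U₁ C.U₂ C.lt (2, 1) c :=
    Finset.mem_filter.mpr ⟨mem_boundaryFinset.mpr C.bd11, C.cuts_21_11⟩
  have hle : ((boundaryFinset C.U₁ C.U₂).filter fun d =>
      Mirrors C.U₁ C.U₂ C.lt (1, 1) d).sum f ≤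
      ((boundaryFinset C.U₁ C.U₂).filter fun c => Cuts C.U₁ C.U₂ C.lt (2, 1) c).sup
        (fun c => ((boundaryFinset C.U₁ C.U₂).filter
          fun d => Mirrors C.U₁ C.U₂ C.lt c d).sum f) :=
    Finset.le_sup (f := fun c => ((boundaryFinset C.U₁ C.U₂).filter
      fun d => Mirrors C.U₁ C.U₂ C.lt c d).sum f) hmem
  omega

lemma sum_M21_lt_f11 {f : ℕ × ℕ → ℕ} (hf : IsFecundity C.U₁ C.U₂ C.lt f) :
    ((boundaryFinset C.U₁ C.U₂).filter fun d =>
      Mirrors C.U₁ C.U₂ C.lt (2, 1) d).sum f + 1 ≤ f (1, 1) := by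
  have h := hf (1, 1) (mem_boundaryFinset.mpr C.bd11)
  have hmem : (2, 1) ∈ (boundaryFinset C.U₁ C.U₂).filter
      fun c => Cuts C.U₁ C.U₂ C.lt (1, 1) c :=
    Finset.mem_filter.mpr ⟨mem_boundaryFinset.mpr C.bd21, C.cuts_11_21⟩
  have hle : ((boundaryFinset C.U₁ C.U₂).filter fun d =>
      Mirrors C.U₁ C.U₂ C.lt (2, 1) d).sum f ≤
      ((boundaryFinset C.U₁ C.U₂).filter fun c => Cuts C.U₁ C.U₂ C.lt (1, 1) c).sup
        (fun c => ((boundaryFinset C.U₁ C.U₂).filter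
          fun d => Mirrors C.U₁ C.U₂ C.lt c d).sum f) :=
    Finset.le_sup (f := fun c => ((boundaryFinset C.U₁ C.U₂).filter
      fun d => Mirrors C.U₁ C.U₂ C.lt c d).sum f) hmem
  omega

end Ctx
namespace Ctx

variable {X : Type*} [DecidableEq X] (C : Ctx X)

lemma classA_of_minus {i k : ℕ} (hb : Boundary C.U₁' C.U₂' (i, k))
    (hm : Bpminus C.U₁ C.U₂ C.x (i, k)) :
    ∃ j a, 1 ≤ j ∧ j ≤ (C.w i).length ∧ nu C.U₁' C.U₂' C.x (i, k) = (i, j) ∧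
      (C.w i)[j-1]? = some a ∧
      (C.w' i)[k-1]? = some (if a = C.x then C.x else a) := by
  obtain ⟨j, a, hj1, hjl, hnu, ha, hcase⟩ := C.classify hb
  rcases hcase with ⟨-, -, hlet, -⟩ | ⟨-, -, -, -, -, hmu, -, -, -⟩
  · exact ⟨j, a, hj1, hjl, hnu, ha, hlet⟩
  · exfalso
    have h1 := C.mu_nu_of_minus hm
    rw [hnu, hmu] at h1
    have := congrArg Prod.snd h1
    simp at this

lemma classB_of_not_minus {i k : ℕ} (hb : Boundary C.U₁' C.U₂' (i, k))
    (hm : ¬ Bpminus C.U₁ C.U₂ C.x (i, k)) :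
    ∃ j, 2 ≤ j ∧ j ≤ (C.w i).length ∧ nu C.U₁' C.U₂' C.x (i, k) = (i, j) ∧
      (C.w i)[j-1]? = some C.x ∧ (C.w' i)[k-1]? = some C.y ∧
      (C.w' i)[k]? = some C.x ∧ k + 1 ≤ (C.w' i).length ∧
      mu C.U₁ C.U₂ C.x (i, j) = (i, k+1) ∧ nu C.U₁' C.U₂' C.x (i, k+1) = (i, j) := by
  obtain ⟨j, a, hj1, hjl, hnu, ha, hcase⟩ := C.classify hb
  rcases hcase with ⟨hmu, hne, -, -⟩ | ⟨rfl, hj2, hly, hlx, hk1l, hmu, hnu1, -, -⟩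
  · exact absurd ⟨(i, j), ⟨⟨hb.1, hj1, hjl⟩, hne⟩, hmu⟩ hm
  · exact ⟨j, hj2, hjl, hnu, ha, hly, hlx, hk1l, hmu, hnu1⟩

/-- `ν` of a non-`B'⁻` (mid) boundary has old letter `x` and `P`-value above `L x`. -/
lemma mid_facts {i k : ℕ} (hb : Boundary C.U₁' C.U₂' (i, k))
    (hm : ¬ Bpminus C.U₁ C.U₂ C.x (i, k)) :
    letter C.U₁ C.U₂ (nu C.U₁' C.U₂' C.x (i, k)) = some C.x ∧
      C.L C.x < C.P (nu C.U₁' C.U₂' C.x (i, k)) := by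
  obtain ⟨j, hj2, hjl, hnu, ha, -, -, -, -, -⟩ := C.classB_of_not_minus hb hm
  constructor
  · rw [hnu]
    exact ha
  · exact C.P_nu_gt_Lx hb (by omega) hjl hnu hj2 ha

/-- Mid boundaries: `Q`-incomparability transfers to old `P` via the pair ends. -/
lemma mid_P_ne {i k i' k' : ℕ} (hb : Boundary C.U₁' C.U₂' (i, k))
    (hc : Boundary C.U₁' C.U₂' (i', k'))
    (hmb : ¬ Bpminus C.U₁ C.U₂ C.x (i, k)) (hmc : ¬ Bpminus C.U₁ C.U₂ C.x (i', k'))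
    (hQ : Q C (i, k) ≠ Q C (i', k')) :
    C.P (nu C.U₁' C.U₂' C.x (i, k)) ≠ C.P (nu C.U₁' C.U₂' C.x (i', k')) := by
  obtain ⟨j, hj2, hjl, hnu, ha, hly, hlx, hk1l, hmu, hnu1⟩ := C.classB_of_not_minus hb hmb
  obtain ⟨j', hj2', hjl', hnu', ha', hly', hlx', hk1l', hmu', hnu1'⟩ :=
    C.classB_of_not_minus hc hmc
  have hbs : Boundary C.U₁' C.U₂' (i, k+1) := ⟨hb.1, by omega, hk1l⟩
  have hcs : Boundary C.U₁' C.U₂' (i', k'+1) := ⟨hc.1, by omega, hk1l'⟩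
  have hQs : Q C (i, k+1) = Q C (i, k) + C.L' C.x := by
    have := prefixLen_pred (L := C.L') (U₁ := C.U₁') (U₂ := C.U₂') hbs
      (show letter C.U₁' C.U₂' (i, k+1) = some C.x from hlx)
    rw [show k + 1 - 1 = k from by omega] at this
    exact this
  have hQs' : Q C (i', k'+1) = Q C (i', k') + C.L' C.x := by
    have := prefixLen_pred (L := C.L') (U₁ := C.U₁') (U₂ := C.U₂') hcs
      (show letter C.U₁' C.U₂' (i', k'+1) = some C.x from hlx')
    rw [show k' + 1 - 1 = k' from by omega] at this
    exact this
  have hmbs : Bpminus C.U₁ C.U₂ C.x (i, k+1) :=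
    ⟨(i, j), ⟨⟨hb.1, by omega, hjl⟩, by intro h; rw [Prod.mk.injEq] at h; omega⟩, hmu⟩
  have hmcs : Bpminus C.U₁ C.U₂ C.x (i', k'+1) :=
    ⟨(i', j'), ⟨⟨hc.1, by omega, hjl'⟩, by intro h; rw [Prod.mk.injEq] at h; omega⟩, hmu'⟩
  have hQne : Q C (i, k+1) ≠ Q C (i', k'+1) := by omega
  have hPne := fun he => hQne ((C.Q_eq_iff hbs hcs hmbs hmcs).mpr he)
  rw [hnu1, hnu1'] at hPne
  rw [hnu, hnu']
  exact hPne

/-- Injectivity of `ν` on `B'⁻`. -/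
lemma nu_inj_minus {a b : ℕ × ℕ} (hma : Bpminus C.U₁ C.U₂ C.x a)
    (hmb : Bpminus C.U₁ C.U₂ C.x b)
    (h : nu C.U₁' C.U₂' C.x a = nu C.U₁' C.U₂' C.x b) : a = b := by
  have h1 := C.mu_nu_of_minus hma
  have h2 := C.mu_nu_of_minus hmb
  rw [← h1, ← h2, h]

/-- Injectivity of `ν` on mid boundaries. -/
lemma nu_inj_mid {i k i' k' : ℕ} (hb : Boundary C.U₁' C.U₂' (i, k))
    (hc : Boundary C.U₁' C.U₂' (i', k'))
    (hmb : ¬ Bpminus C.U₁ C.U₂ C.x (i, k)) (hmc : ¬ Bpminus C.U₁ C.U₂ C.x (i', k'))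
    (h : nu C.U₁' C.U₂' C.x (i, k) = nu C.U₁' C.U₂' C.x (i', k')) : (i, k) = (i', k') := by
  obtain ⟨j, hj2, hjl, hnu, -, -, -, -, hmu, -⟩ := C.classB_of_not_minus hb hmb
  obtain ⟨j', hj2', hjl', hnu', -, -, -, -, hmu', -⟩ := C.classB_of_not_minus hc hmc
  rw [hnu, hnu'] at h
  rw [h] at hmu
  rw [hmu'] at hmu
  rw [Prod.mk.injEq] at hmu ⊢
  omega

end Ctx
namespace Ctx

variable {X : Type*} [DecidableEq X] (C : Ctx X)

lemma sum_transfer {f : ℕ × ℕ → ℕ} (hf : IsFecundity C.U₁ C.U₂ C.lt f)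
    {c' : ℕ × ℕ} (hcb : Boundary C.U₁' C.U₂' c') :
    (((boundaryFinset C.U₁' C.U₂').filter fun d' =>
        Mirrors C.U₁' C.U₂' C.lt' c' d').sum fun d' => f (nu C.U₁' C.U₂' C.x d'))
      ≤ ((boundaryFinset C.U₁ C.U₂).filter fun d =>
          Mirrors C.U₁ C.U₂ C.lt (nu C.U₁' C.U₂' C.x c') d).sum f := by
  classical
  obtain ⟨i', k'⟩ := c'
  set S' := (boundaryFinset C.U₁' C.U₂').filter
    (fun d' => Mirrors C.U₁' C.U₂' C.lt' (i', k') d') with hS'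
  set T := (boundaryFinset C.U₁ C.U₂).filter
    (fun d => Mirrors C.U₁ C.U₂ C.lt (nu C.U₁' C.U₂' C.x (i', k')) d) with hT
  have hdata : ∀ d' ∈ S', Boundary C.U₁' C.U₂' d' ∧
      letter C.U₁' C.U₂' (i', k') = letter C.U₁' C.U₂' d' ∧ Q C (i', k') ≠ Q C d' := by
    intro d' hd'
    rw [hS', Finset.mem_filter, mem_boundaryFinset] at hd'
    obtain ⟨hdb, hdm⟩ := hd'
    have h := (mirrors_iff C.hbo' C.hL' C.hiff' hcb hdb).mp hdm
    exact ⟨hdb, h.1, h.2⟩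
  set SA := S'.filter (fun d' => Bpminus C.U₁ C.U₂ C.x d') with hSA
  set SB := S'.filter (fun d' => ¬ Bpminus C.U₁ C.U₂ C.x d') with hSB
  have hsplit : SA.sum (fun d' => f (nu C.U₁' C.U₂' C.x d')) + SB.sum (fun d' => f (nu C.U₁' C.U₂' C.x d'))
      = S'.sum (fun d' => f (nu C.U₁' C.U₂' C.x d')) :=
    Finset.sum_filter_add_sum_filter_not S' _ _
  by_cases hcm : Bpminus C.U₁ C.U₂ C.x (i', k')
  · -- `c'` is in `B'⁻`
    obtain ⟨jc, ac, hjc1, hjcl, hnuc, hac, hletc⟩ := C.classA_of_minus hcb hcm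
    have hld : letter C.U₁ C.U₂ (nu C.U₁' C.U₂' C.x (i', k')) = some ac := by
      rw [hnuc]; exact hac
    -- mapping of the `B'⁻` mirrors
    have hmapSA : ∀ d' ∈ SA, nu C.U₁' C.U₂' C.x d' ∈ T ∧ nu C.U₁' C.U₂' C.x d' ≠ (2, 1) := by
      rintro ⟨id, kd⟩ hd'
      rw [hSA, Finset.mem_filter] at hd'
      obtain ⟨hd'S, hd'm⟩ := hd'
      obtain ⟨hdb, hlet, hQne⟩ := hdata _ hd'S
      obtain ⟨jd, ad, hjd1, hjdl, hnud, had, hletd⟩ := C.classA_of_minus hdb hd'm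
      have hldd : letter C.U₁ C.U₂ (nu C.U₁' C.U₂' C.x (id, kd)) = some ad := by
        rw [hnud]; exact had
      have hletc' : letter C.U₁' C.U₂' (i', k') = some (if ac = C.x then C.x else ac) :=
        hletc
      have hletd' : letter C.U₁' C.U₂' (id, kd) = some (if ad = C.x then C.x else ad) :=
        hletd
      have hadac : ad = ac := by
        rw [hletc', hletd'] at hlet
        injection hlet with hlet
        rcases eq_or_ne ac C.x with h1 | h1 <;> rcases eq_or_ne ad C.x with h2 | h2
        · rw [h1, h2]
        · rw [if_pos h1, if_neg h2] at hlet
          exact absurd hlet.symm h2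
        · rw [if_neg h1, if_pos h2] at hlet
          exact absurd hlet h1
        · rw [if_neg h1, if_neg h2] at hlet
          exact hlet.symm
      have hPne : C.P (nu C.U₁' C.U₂' C.x (i', k')) ≠ C.P (nu C.U₁' C.U₂' C.x (id, kd)) :=
        fun he => hQne ((C.Q_eq_iff hcb hdb hcm hd'm).mpr he)
      refine ⟨Finset.mem_filter.mpr ⟨mem_boundaryFinset.mpr (C.nu_bd hdb), ?_⟩,
        C.nu_ne_21 hdb⟩
      rw [mirrors_iff C.hbo C.hL C.hiff (C.nu_bd hcb) (C.nu_bd hdb)]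
      exact ⟨by rw [hld, hldd, hadac], hPne⟩
    have hinjSA : ∀ a ∈ SA, ∀ b ∈ SA, nu C.U₁' C.U₂' C.x a = nu C.U₁' C.U₂' C.x b → a = b := by
      intro a ha b hb h
      rw [hSA, Finset.mem_filter] at ha hb
      exact C.nu_inj_minus ha.2 hb.2 h
    by_cases hacy : ac = C.y
    · -- `c'` is a genuine `y` boundary
      -- the mid mirrors map into M(1,1), bounded collectively by f(2,1)
      have hmapSB : ∀ d' ∈ SB, nu C.U₁' C.U₂' C.x d' ∈ (boundaryFinset C.U₁ C.U₂).filter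
          (fun d => Mirrors C.U₁ C.U₂ C.lt (1, 1) d) := by
        intro d' hd'
        rw [hSB, Finset.mem_filter] at hd'
        obtain ⟨hd'S, hd'm⟩ := hd'
        obtain ⟨hdb, hlet, hQne⟩ := hdata _ hd'S
        obtain ⟨id, kd⟩ := d'
        obtain ⟨hlx, hgt⟩ := C.mid_facts hdb hd'm
        refine Finset.mem_filter.mpr ⟨mem_boundaryFinset.mpr (C.nu_bd hdb), ?_⟩
        rw [mirrors_iff C.hbo C.hL C.hiff C.bd11 (C.nu_bd hdb)]
        refine ⟨by rw [C.letter_old_11, hlx], ?_⟩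
        show C.P (1, 1) ≠ C.P (nu C.U₁' C.U₂' C.x (id, kd))
        have h0 := C.P11
        omega
      have hinjSB : ∀ a ∈ SB, ∀ b ∈ SB, nu C.U₁' C.U₂' C.x a = nu C.U₁' C.U₂' C.x b → a = b := by
        rintro ⟨ia, ka⟩ ha ⟨ib, kb⟩ hb h
        rw [hSB, Finset.mem_filter] at ha hb
        exact C.nu_inj_mid (hdata _ ha.1).1 (hdata _ hb.1).1 ha.2 hb.2 h
      have hsumSB : SB.sum (fun d' => f (nu C.U₁' C.U₂' C.x d')) ≤
          ((boundaryFinset C.U₁ C.U₂).filter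
            (fun d => Mirrors C.U₁ C.U₂ C.lt (1, 1) d)).sum f :=
        sum_map_le hmapSB hinjSB
      have hfSB := C.sum_M11_lt_f21 hf
      have h21T : (2, 1) ∈ T := by
        rw [hT, Finset.mem_filter]
        refine ⟨mem_boundaryFinset.mpr C.bd21, ?_⟩
        rw [mirrors_iff C.hbo C.hL C.hiff (C.nu_bd hcb) C.bd21]
        refine ⟨by rw [hld, C.letter_old_21, hacy], ?_⟩
        show C.P (nu C.U₁' C.U₂' C.x (i', k')) ≠ C.P (2, 1)
        have h1 := C.P_nu_gt_Ly hcb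
        have h2 := C.P21
        omega
      have hsumSA : SA.sum (fun d' => f (nu C.U₁' C.U₂' C.x d')) ≤ (T.erase (2, 1)).sum f :=
        sum_map_le (fun a ha => Finset.mem_erase.mpr ⟨(hmapSA a ha).2, (hmapSA a ha).1⟩)
          hinjSA
      have htot : f (2, 1) + (T.erase (2, 1)).sum f = T.sum f :=
        Finset.add_sum_erase T f h21T
      omega
    · -- plain case : no mid mirrors
      have hSBe : SB = ∅ := by
        rw [Finset.eq_empty_iff_forall_notMem]
        rintro ⟨id, kd⟩ hd'
        rw [hSB, Finset.mem_filter] at hd'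
        obtain ⟨hd'S, hd'm⟩ := hd'
        obtain ⟨hdb, hlet, hQne⟩ := hdata _ hd'S
        obtain ⟨jd, hjd2, hjdl, hnud, had, hly, -, -, -, -⟩ :=
          C.classB_of_not_minus hdb hd'm
        have hletd' : letter C.U₁' C.U₂' (id, kd) = some C.y := hly
        have hletc' : letter C.U₁' C.U₂' (i', k') = some (if ac = C.x then C.x else ac) :=
          hletc
        rw [hletc', hletd'] at hlet
        injection hlet with hlet
        rcases eq_or_ne ac C.x with h1 | h1
        · rw [if_pos h1] at hlet
          exact C.yx hlet.symm
        · rw [if_neg h1] at hlet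
          exact hacy hlet
      have hsumSA : SA.sum (fun d' => f (nu C.U₁' C.U₂' C.x d')) ≤ T.sum f :=
        sum_map_le (fun a ha => (hmapSA a ha).1) hinjSA
      rw [hSBe] at hsplit
      simp at hsplit
      omega
  · -- `c'` is a mid boundary
    obtain ⟨hlxc, hgtc⟩ := C.mid_facts hcb hcm
    have hmapSA : ∀ d' ∈ SA, nu C.U₁' C.U₂' C.x d' ∈ (boundaryFinset C.U₁ C.U₂).filter
        (fun d => Mirrors C.U₁ C.U₂ C.lt (2, 1) d) := by
      rintro ⟨id, kd⟩ hd'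
      rw [hSA, Finset.mem_filter] at hd'
      obtain ⟨hd'S, hd'm⟩ := hd'
      obtain ⟨hdb, hlet, hQne⟩ := hdata _ hd'S
      obtain ⟨jd, ad, hjd1, hjdl, hnud, had, hletd⟩ := C.classA_of_minus hdb hd'm
      -- letter of c' is y, so ad = y
      obtain ⟨jc, hjc2, hjcl, hnuc, hacx, hlyc, -, -, -, -⟩ :=
        C.classB_of_not_minus hcb hcm
      have hletc' : letter C.U₁' C.U₂' (i', k') = some C.y := hlyc
      have hletd' : letter C.U₁' C.U₂' (id, kd) = some (if ad = C.x then C.x else ad) :=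
        hletd
      rw [hletc', hletd'] at hlet
      injection hlet with hlet
      have hady : ad = C.y := by
        rcases eq_or_ne ad C.x with h2 | h2
        · rw [if_pos h2] at hlet
          exact absurd hlet C.yx
        · rw [if_neg h2] at hlet
          exact hlet.symm
      have hldd : letter C.U₁ C.U₂ (nu C.U₁' C.U₂' C.x (id, kd)) = some ad := by
        rw [hnud]; exact had
      refine Finset.mem_filter.mpr ⟨mem_boundaryFinset.mpr (C.nu_bd hdb), ?_⟩
      rw [mirrors_iff C.hbo C.hL C.hiff C.bd21 (C.nu_bd hdb)]
      refine ⟨by rw [C.letter_old_21, hldd, hady], ?_⟩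
      show C.P (2, 1) ≠ C.P (nu C.U₁' C.U₂' C.x (id, kd))
      have h1 := C.P_nu_gt_Ly hdb
      have h2 := C.P21
      omega
    have hinjSA : ∀ a ∈ SA, ∀ b ∈ SA, nu C.U₁' C.U₂' C.x a = nu C.U₁' C.U₂' C.x b → a = b := by
      intro a ha b hb h
      rw [hSA, Finset.mem_filter] at ha hb
      exact C.nu_inj_minus ha.2 hb.2 h
    have hsumSA : SA.sum (fun d' => f (nu C.U₁' C.U₂' C.x d')) ≤
        ((boundaryFinset C.U₁ C.U₂).filter
          (fun d => Mirrors C.U₁ C.U₂ C.lt (2, 1) d)).sum f :=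
      sum_map_le hmapSA hinjSA
    have hfSA := C.sum_M21_lt_f11 hf
    have hmapSB : ∀ d' ∈ SB, nu C.U₁' C.U₂' C.x d' ∈ T ∧ nu C.U₁' C.U₂' C.x d' ≠ (1, 1) := by
      rintro ⟨id, kd⟩ hd'
      rw [hSB, Finset.mem_filter] at hd'
      obtain ⟨hd'S, hd'm⟩ := hd'
      obtain ⟨hdb, hlet, hQne⟩ := hdata _ hd'S
      obtain ⟨hlxd, hgtd⟩ := C.mid_facts hdb hd'm
      have hPne : C.P (nu C.U₁' C.U₂' C.x (i', k')) ≠ C.P (nu C.U₁' C.U₂' C.x (id, kd)) :=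
        C.mid_P_ne hcb hdb hcm hd'm hQne
      constructor
      · refine Finset.mem_filter.mpr ⟨mem_boundaryFinset.mpr (C.nu_bd hdb), ?_⟩
        rw [mirrors_iff C.hbo C.hL C.hiff (C.nu_bd hcb) (C.nu_bd hdb)]
        exact ⟨by rw [hlxc, hlxd], hPne⟩
      · intro he
        have h0 := C.P11
        rw [he] at hgtd
        omega
    have hinjSB : ∀ a ∈ SB, ∀ b ∈ SB, nu C.U₁' C.U₂' C.x a = nu C.U₁' C.U₂' C.x b → a = b := by
      rintro ⟨ia, ka⟩ ha ⟨ib, kb⟩ hb h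
      rw [hSB, Finset.mem_filter] at ha hb
      exact C.nu_inj_mid (hdata _ ha.1).1 (hdata _ hb.1).1 ha.2 hb.2 h
    have hsumSB : SB.sum (fun d' => f (nu C.U₁' C.U₂' C.x d')) ≤ (T.erase (1, 1)).sum f :=
      sum_map_le (fun a ha => Finset.mem_erase.mpr ⟨(hmapSB a ha).2, (hmapSB a ha).1⟩)
        hinjSB
    have h11T : (1, 1) ∈ T := by
      rw [hT, Finset.mem_filter]
      refine ⟨mem_boundaryFinset.mpr C.bd11, ?_⟩
      rw [mirrors_iff C.hbo C.hL C.hiff (C.nu_bd hcb) C.bd11]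
      refine ⟨by rw [hlxc, C.letter_old_11], ?_⟩
      show C.P (nu C.U₁' C.U₂' C.x (i', k')) ≠ C.P (1, 1)
      have h2 := C.P11
      omega
    have htot : f (1, 1) + (T.erase (1, 1)).sum f = T.sum f :=
      Finset.add_sum_erase T f h11T
    omega

end Ctx
/-- **Lemma.** After a case II coherent extended Nielsen transformation of an
extended word equation with acyclic cut graph, the fecundity of every new boundary
`(i,j)` is at most the fecundity of the old boundary `(i,ν(i,j))`. -/
theorem fecundity_le_caseII (U₁ U₂ U₁' U₂' : List X) (lt lt' : BRel) (x y : X)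
    (h₁ : U₁ ≠ []) (h₂ : U₂ ≠ []) (hbo : BoundaryOrder U₁ U₂ lt)
    (hcoh : Coherent U₁ U₂ lt)
    (hII : NielsenIIxy U₁ U₂ lt U₁' U₂' lt' x y) (hcoh' : Coherent U₁' U₂' lt')
    (hacyc : Acyclic U₁ U₂ lt)
    (f f' : ℕ × ℕ → ℕ)
    (hf : IsFecundity U₁ U₂ lt f) (hf' : IsFecundity U₁' U₂' lt' f') :
    ∀ b, Boundary U₁' U₂' b → f' b ≤ f (nu U₁' U₂' x b) := by
  obtain ⟨L, hL, hiff⟩ := hcoh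
  obtain ⟨L', hL', hiff'⟩ := hcoh'
  obtain ⟨hx, hy, h21, hU₁', hU₂', hbo', hmatch⟩ := hII
  let C : Ctx X := ⟨U₁, U₂, U₁', U₂', lt, lt', x, y, L, L', hL, hL', h₁, h₂,
    hbo, hbo', hiff, hiff', hx, hy, h21, hU₁', hU₂', hmatch⟩
  suffices h : ∀ n b, Boundary U₁' U₂' b → f' b ≤ n → f' b ≤ f (nu U₁' U₂' x b) by
    intro b hb
    exact h (f' b) b hb (le_refl _)
  intro n
  induction n with
  | zero =>
    intro b hb h0
    have := hf' b (mem_boundaryFinset.mpr hb)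
    omega
  | succ n ih =>
    intro b hb hle
    have hnubd : Boundary U₁ U₂ (nu U₁' U₂' x b) := by
      obtain ⟨i, k⟩ := b
      exact C.nu_bd hb
    have hfb := hf' b (mem_boundaryFinset.mpr hb)
    have hfnb := hf (nu U₁' U₂' x b) (mem_boundaryFinset.mpr hnubd)
    have key : ∀ c' ∈ (boundaryFinset U₁' U₂').filter (fun c => Cuts U₁' U₂' lt' b c),
        ((boundaryFinset U₁' U₂').filter (fun d => Mirrors U₁' U₂' lt' c' d)).sum f' + 1
          ≤ f (nu U₁' U₂' x b) := by
      intro c' hc'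
      rw [Finset.mem_filter, mem_boundaryFinset] at hc'
      obtain ⟨hc'bd, hc'cut⟩ := hc'
      have hstep : ∀ d ∈ (boundaryFinset U₁' U₂').filter
          (fun d => Mirrors U₁' U₂' lt' c' d), f' d ≤ f (nu U₁' U₂' x d) := by
        intro d hd
        have hdbd : Boundary U₁' U₂' d :=
          mem_boundaryFinset.mp (Finset.mem_filter.mp hd).1
        apply ih d hdbd
        have hsum_ge : f' d ≤ ((boundaryFinset U₁' U₂').filter
            (fun d => Mirrors U₁' U₂' lt' c' d)).sum f' :=
          Finset.single_le_sum (fun _ _ => Nat.zero_le _) hd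
        have hsup_ge : ((boundaryFinset U₁' U₂').filter
            (fun d => Mirrors U₁' U₂' lt' c' d)).sum f' ≤
            ((boundaryFinset U₁' U₂').filter (fun c => Cuts U₁' U₂' lt' b c)).sup
              (fun c => ((boundaryFinset U₁' U₂').filter
                (fun d => Mirrors U₁' U₂' lt' c d)).sum f') :=
          Finset.le_sup (f := fun c => ((boundaryFinset U₁' U₂').filter
            (fun d => Mirrors U₁' U₂' lt' c d)).sum f')
            (Finset.mem_filter.mpr ⟨mem_boundaryFinset.mpr hc'bd, hc'cut⟩)
        omega
      have h1 : ((boundaryFinset U₁' U₂').filter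
            (fun d => Mirrors U₁' U₂' lt' c' d)).sum f'
          ≤ ((boundaryFinset U₁' U₂').filter
            (fun d => Mirrors U₁' U₂' lt' c' d)).sum (fun d => f (nu U₁' U₂' x d)) :=
        Finset.sum_le_sum hstep
      have h2 : ((boundaryFinset U₁' U₂').filter
            (fun d => Mirrors U₁' U₂' lt' c' d)).sum (fun d => f (nu U₁' U₂' x d))
          ≤ ((boundaryFinset U₁ U₂).filter
            (fun d => Mirrors U₁ U₂ lt (nu U₁' U₂' x c') d)).sum f :=
        C.sum_transfer hf hc'bd
      have hcutold : Cuts U₁ U₂ lt (nu U₁' U₂' x b) (nu U₁' U₂' x c') :=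
        C.cut_transfer hc'cut
      have hnucbd : Boundary U₁ U₂ (nu U₁' U₂' x c') := by
        obtain ⟨i, k⟩ := c'
        exact C.nu_bd hc'bd
      have h3 : ((boundaryFinset U₁ U₂).filter
            (fun d => Mirrors U₁ U₂ lt (nu U₁' U₂' x c') d)).sum f
          ≤ ((boundaryFinset U₁ U₂).filter
            (fun c => Cuts U₁ U₂ lt (nu U₁' U₂' x b) c)).sup
              (fun c => ((boundaryFinset U₁ U₂).filter
                (fun d => Mirrors U₁ U₂ lt c d)).sum f) :=
        Finset.le_sup (f := fun c => ((boundaryFinset U₁ U₂).filter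
          (fun d => Mirrors U₁ U₂ lt c d)).sum f)
          (Finset.mem_filter.mpr ⟨mem_boundaryFinset.mpr hnucbd, hcutold⟩)
      omega
    have hsup : ((boundaryFinset U₁' U₂').filter (fun c => Cuts U₁' U₂' lt' b c)).sup
        (fun c => ((boundaryFinset U₁' U₂').filter
          (fun d => Mirrors U₁' U₂' lt' c d)).sum f')
        ≤ f (nu U₁' U₂' x b) - 1 :=
      Finset.sup_le fun c' hc' => by have := key c' hc'; omega
    omega

end ExtWordEq
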